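/- Let V be a finite-dimensional complex vector space equipped with a nondegenerate symmetric bilinear form Φ, and let A, B : V → V be linear involutions (A ∘ A = id, B ∘ B = id) that preserve Φ (i.e. Φ(A x, A y) = Φ(x, y) and Φ(B x, B y) = Φ(x, y) for all x, y). Then 2 · dim( ker(A − id) ∩ ker(B − id) ) = dim ker(A ∘ B − id) + dim ker(A − id) + dim ker(B − id) − dim V. -/

import Mathlib

open Module LinearMap

lemma two_smul_eq_zero_aux {V : Type*} [AddCommGroup V] [Module ℂ V] {x : V}
    (h : x = -x) : x = 0 := by
  have h2 : (2 : ℂ) • x = 0 := by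
    rw [two_smul]
    nth_rewrite 2 [h]
    exact add_neg_cancel x
  rcases smul_eq_zero.mp h2 with h | h
  · norm_num at h
  · exact h

/-- For an involution `A` preserving a symmetric nondegenerate bilinear form, the
`(-1)`-eigenspace is the orthogonal of the `(+1)`-eigenspace. -/
lemma neg_eigenspace_eq_orthogonal
    (V : Type*) [AddCommGroup V] [Module ℂ V] [FiniteDimensional ℂ V]
    (Φ : V →ₗ[ℂ] V →ₗ[ℂ] ℂ)
    (hΦsymm : ∀ x y : V, Φ x y = Φ y x)
    (hΦnd : ∀ v : V, (∀ w : V, Φ v w = 0) → v = 0)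
    (A : V →ₗ[ℂ] V) (hA : A ∘ₗ A = LinearMap.id)
    (hAΦ : ∀ x y : V, Φ (A x) (A y) = Φ x y) :
    LinearMap.ker (A + LinearMap.id) =
      LinearMap.BilinForm.orthogonal Φ (LinearMap.ker (A - LinearMap.id)) := by
  have hrefl : LinearMap.BilinForm.IsRefl Φ := by
    intro x y h; rw [hΦsymm]; exact h
  have hnd : LinearMap.BilinForm.Nondegenerate Φ :=
    ⟨hΦnd, fun y h => hΦnd y (fun w => by rw [hΦsymm]; exact h w)⟩
  have hA2 : ∀ x : V, A (A x) = x := fun x => congrFun (congrArg DFunLike.coe hA) x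
  have hdisj : Disjoint (LinearMap.ker (A - LinearMap.id)) (LinearMap.ker (A + LinearMap.id)) := by
    rw [Submodule.disjoint_def]
    intro x h1 h2
    rw [LinearMap.mem_ker, LinearMap.sub_apply, LinearMap.id_apply, sub_eq_zero] at h1
    rw [LinearMap.mem_ker, LinearMap.add_apply, LinearMap.id_apply, add_eq_zero_iff_eq_neg] at h2
    refine two_smul_eq_zero_aux ?_
    conv_lhs => rw [← h1]
    exact h2
  have hcodisj : LinearMap.ker (A - LinearMap.id) ⊔ LinearMap.ker (A + LinearMap.id) = ⊤ := by
    rw [eq_top_iff]; intro x _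
    refine Submodule.mem_sup.mpr ⟨(2⁻¹ : ℂ) • (x + A x), ?_, (2⁻¹ : ℂ) • (x - A x), ?_, ?_⟩
    · rw [LinearMap.mem_ker, LinearMap.sub_apply, LinearMap.id_apply, sub_eq_zero, map_smul,
        map_add, hA2]
      rw [add_comm]
    · rw [LinearMap.mem_ker, LinearMap.add_apply, LinearMap.id_apply, add_eq_zero_iff_eq_neg,
        map_smul, map_sub, hA2, ← smul_neg]
      congr 1; abel
    · rw [← smul_add]
      have : x + A x + (x - A x) = (2 : ℂ) • x := by rw [two_smul]; abel
      rw [this, smul_smul]; norm_num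
  have hdim : finrank ℂ (LinearMap.ker (A - LinearMap.id)) +
      finrank ℂ (LinearMap.ker (A + LinearMap.id)) = finrank ℂ V := by
    have := Submodule.finrank_sup_add_finrank_inf_eq
      (LinearMap.ker (A - LinearMap.id)) (LinearMap.ker (A + LinearMap.id))
    rw [hcodisj, hdisj.eq_bot, finrank_top, finrank_bot, add_zero] at this
    omega
  have hle : LinearMap.ker (A + LinearMap.id) ≤
      LinearMap.BilinForm.orthogonal Φ (LinearMap.ker (A - LinearMap.id)) := by
    intro x hx
    rw [LinearMap.mem_ker, LinearMap.add_apply, LinearMap.id_apply, add_eq_zero_iff_eq_neg] at hx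
    rw [LinearMap.BilinForm.mem_orthogonal_iff]
    intro n hn
    rw [LinearMap.mem_ker, LinearMap.sub_apply, LinearMap.id_apply, sub_eq_zero] at hn
    have h1 : Φ n x = Φ (A n) (A x) := (hAΦ n x).symm
    rw [hn, hx] at h1
    have h2 : (2 : ℂ) * Φ n x = 0 := by
      have : Φ n x = - Φ n x := by simpa using h1
      linear_combination this
    rcases mul_eq_zero.mp h2 with h | h
    · norm_num at h
    · exact h
  have hdim2 : finrank ℂ
      (LinearMap.BilinForm.orthogonal Φ (LinearMap.ker (A - LinearMap.id))) =
      finrank ℂ (LinearMap.ker (A + LinearMap.id)) := by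
    rw [LinearMap.BilinForm.finrank_orthogonal hnd]
    have := Submodule.finrank_le (LinearMap.ker (A - LinearMap.id))
    omega
  exact Submodule.eq_of_le_of_finrank_le hle (le_of_eq hdim2)

theorem stmt_3
    (V : Type*) [AddCommGroup V] [Module ℂ V] [FiniteDimensional ℂ V]
    (Φ : V →ₗ[ℂ] V →ₗ[ℂ] ℂ)
    (hΦsymm : ∀ x y : V, Φ x y = Φ y x)
    (hΦnd : ∀ v : V, (∀ w : V, Φ v w = 0) → v = 0)
    (A B : V →ₗ[ℂ] V)
    (hA : A ∘ₗ A = LinearMap.id) (hB : B ∘ₗ B = LinearMap.id)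
    (hAΦ : ∀ x y : V, Φ (A x) (A y) = Φ x y)
    (hBΦ : ∀ x y : V, Φ (B x) (B y) = Φ x y) :
    (2 * Module.finrank ℂ ↥(LinearMap.ker (A - LinearMap.id) ⊓ LinearMap.ker (B - LinearMap.id))
        : ℤ)
      = Module.finrank ℂ (LinearMap.ker (A ∘ₗ B - LinearMap.id))
        + Module.finrank ℂ (LinearMap.ker (A - LinearMap.id))
        + Module.finrank ℂ (LinearMap.ker (B - LinearMap.id))
        - Module.finrank ℂ V := by
  have hrefl : LinearMap.BilinForm.IsRefl Φ := by
    intro x y h; rw [hΦsymm]; exact h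
  have hnd : LinearMap.BilinForm.Nondegenerate Φ :=
    ⟨hΦnd, fun y h => hΦnd y (fun w => by rw [hΦsymm]; exact h w)⟩
  have hA2 : ∀ x : V, A (A x) = x := fun x => congrFun (congrArg DFunLike.coe hA) x
  have hB2 : ∀ x : V, B (B x) = x := fun x => congrFun (congrArg DFunLike.coe hB) x
  set K1 := LinearMap.ker (A - LinearMap.id) with hK1
  set K2 := LinearMap.ker (B - LinearMap.id) with hK2
  set K1' := LinearMap.ker (A + LinearMap.id) with hK1'
  set K2' := LinearMap.ker (B + LinearMap.id) with hK2'
  have memK1 : ∀ x : V, x ∈ K1 ↔ A x = x := by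
    intro x; rw [hK1, LinearMap.mem_ker, LinearMap.sub_apply, LinearMap.id_apply, sub_eq_zero]
  have memK2 : ∀ x : V, x ∈ K2 ↔ B x = x := by
    intro x; rw [hK2, LinearMap.mem_ker, LinearMap.sub_apply, LinearMap.id_apply, sub_eq_zero]
  have memK1' : ∀ x : V, x ∈ K1' ↔ A x = -x := by
    intro x
    rw [hK1', LinearMap.mem_ker, LinearMap.add_apply, LinearMap.id_apply, add_eq_zero_iff_eq_neg]
  have memK2' : ∀ x : V, x ∈ K2' ↔ B x = -x := by
    intro x
    rw [hK2', LinearMap.mem_ker, LinearMap.add_apply, LinearMap.id_apply, add_eq_zero_iff_eq_neg]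
  have hO1 : K1' = LinearMap.BilinForm.orthogonal Φ K1 :=
    neg_eigenspace_eq_orthogonal V Φ hΦsymm hΦnd A hA hAΦ
  have hO2 : K2' = LinearMap.BilinForm.orthogonal Φ K2 :=
    neg_eigenspace_eq_orthogonal V Φ hΦsymm hΦnd B hB hBΦ
  have hOinf : K1' ⊓ K2' = LinearMap.BilinForm.orthogonal Φ (K1 ⊔ K2) := by
    rw [hO1, hO2]
    ext x
    simp only [Submodule.mem_inf, LinearMap.BilinForm.mem_orthogonal_iff]
    constructor
    · rintro ⟨h1, h2⟩ n hn
      obtain ⟨a, ha, b, hb, rfl⟩ := Submodule.mem_sup.mp hn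
      rw [map_add, LinearMap.add_apply,
        LinearMap.BilinForm.isOrtho_def.mp (h1 a ha), LinearMap.BilinForm.isOrtho_def.mp (h2 b hb),
        add_zero]
    · intro h
      exact ⟨fun n hn => h n (Submodule.mem_sup_left hn),
             fun n hn => h n (Submodule.mem_sup_right hn)⟩
  have hdimOrth : finrank ℂ (K1' ⊓ K2' : Submodule ℂ V) =
      finrank ℂ V - finrank ℂ (K1 ⊔ K2 : Submodule ℂ V) := by
    rw [hOinf, LinearMap.BilinForm.finrank_orthogonal hnd]
  have hker : LinearMap.ker (A ∘ₗ B - LinearMap.id) = LinearMap.ker (A - B) := by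
    ext x
    simp only [LinearMap.mem_ker, LinearMap.sub_apply, LinearMap.id_apply, LinearMap.comp_apply,
      sub_eq_zero]
    constructor
    · intro h
      calc A x = A (A (B x)) := by rw [h]
        _ = B x := hA2 _
    · intro h; rw [← h, hA2]
  set S := LinearMap.ker (A - B) with hS
  have memS : ∀ x : V, x ∈ S ↔ A x = B x := by
    intro x; rw [hS, LinearMap.mem_ker, LinearMap.sub_apply, sub_eq_zero]
  have hsup : (K1 ⊓ K2) ⊔ (K1' ⊓ K2') = S := by
    apply le_antisymm
    · apply sup_le
      · intro x hx
        obtain ⟨h1, h2⟩ := Submodule.mem_inf.mp hx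
        rw [memS, (memK1 x).mp h1, (memK2 x).mp h2]
      · intro x hx
        obtain ⟨h1, h2⟩ := Submodule.mem_inf.mp hx
        rw [memS, (memK1' x).mp h1, (memK2' x).mp h2]
    · intro x hx
      rw [memS] at hx
      refine Submodule.mem_sup.mpr ⟨(2⁻¹ : ℂ) • (x + A x), Submodule.mem_inf.mpr ⟨?_, ?_⟩,
        (2⁻¹ : ℂ) • (x - A x), Submodule.mem_inf.mpr ⟨?_, ?_⟩, ?_⟩
      · rw [memK1, map_smul, map_add, hA2, add_comm]
      · rw [memK2, map_smul, map_add, hx, hB2]; congr 1; abel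
      · rw [memK1', map_smul, map_sub, hA2, ← smul_neg]; congr 1; abel
      · rw [memK2', map_smul, map_sub, hx, hB2, ← smul_neg]; congr 1; abel
      · rw [← smul_add]
        have : x + A x + (x - A x) = (2 : ℂ) • x := by rw [two_smul]; abel
        rw [this, smul_smul]; norm_num
  have hinf : (K1 ⊓ K2) ⊓ (K1' ⊓ K2') = ⊥ := by
    rw [eq_bot_iff]
    intro x hx
    obtain ⟨hx1, hx2⟩ := Submodule.mem_inf.mp hx
    obtain ⟨h1, _⟩ := Submodule.mem_inf.mp hx1
    obtain ⟨h1', _⟩ := Submodule.mem_inf.mp hx2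
    have e1 := (memK1 x).mp h1
    have e2 := (memK1' x).mp h1'
    have hx0 : x = 0 := by
      refine two_smul_eq_zero_aux ?_
      conv_lhs => rw [← e1]
      exact e2
    simp [hx0]
  have hdimS : finrank ℂ S = finrank ℂ (K1 ⊓ K2 : Submodule ℂ V) +
      finrank ℂ (K1' ⊓ K2' : Submodule ℂ V) := by
    have := Submodule.finrank_sup_add_finrank_inf_eq (K1 ⊓ K2) (K1' ⊓ K2')
    rw [hsup, hinf, finrank_bot, add_zero] at this
    omega
  have hgrass : finrank ℂ (K1 ⊔ K2 : Submodule ℂ V) + finrank ℂ (K1 ⊓ K2 : Submodule ℂ V) =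
      finrank ℂ K1 + finrank ℂ K2 := Submodule.finrank_sup_add_finrank_inf_eq K1 K2
  have hle1 : finrank ℂ (K1 ⊔ K2 : Submodule ℂ V) ≤ finrank ℂ V := Submodule.finrank_le _
  rw [hker]
  omega
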